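/- Let r > 0 and let A, B, C be real numbers with A ≠ 0, B ≠ 0, C ≠ 0. Then there is no (x₁, x₂, x₃, x₄) ∈ ℝ⁴ satisfying simultaneously the following ten equations. Off-diagonal equations: (1) x₁x₂·[(2/r²)(x₁² + (75/32)x₂² + (9/2)x₃² + 12x₄²)·C + (141/8)·B] = 0; (2) x₁x₃·[(2/r²)((1/4)x₁² + (75/64)x₂² + (45/16)x₃² + 9x₄²)·C + (189/16)·B] = 0; (3) x₁x₄·[(2/r²)((5/4)x₁² + (75/64)x₂² + (9/16)x₃² − 3x₄²)·C + (9/16)·B] = 0; (4) x₂x₃·[(2/r²)(−(1/2)x₁² + (9/8)x₃² + 6x₄²)·C + (19/4)·B] = 0; (5) x₂x₄·[(2/r²)(x₁² + (75/32)x₂² + (9/4)x₃²)·C + (73/8)·B] = 0; (6) x₃x₄·[(2/r²)((11/4)x₁² + (225/64)x₂² + (63/16)x₃² + 3x₄²)·C + (287/16)·B] = 0. Diagonal equations: (7) −(323/(12r²))·A + (1/(3r⁴))((7/2)x₁² − (4175/32)x₂² − (2727/16)x₃² − 217x₄²)·B + (8/(3r⁶))·[(x₁² + (25/16)x₂² +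 (9/4)x₃² + 4x₄²)(−(7/4)x₁² − (75/32)x₂² − (45/16)x₃² − 3x₄²) + x₁²((7/4)x₁² + (225/64)x₂² + (99/16)x₃² + 15x₄²)]·C = 0; (8) −(41/(6r²))·A + (1/r⁴)(−(97/6)x₁² + (75/24)x₂² − 21x₃² + (2/3)x₄²)·B + (1/(3r⁶))·[(8x₁² + (25/2)x₂² + 18x₃² + 32x₄²)(−x₁² − (75/64)x₂² − (9/8)x₃²) + x₂²((25/8)x₁² + (1875/128)x₂² + (1125/32)x₃² + (225/2)x₄²)]·C = 0; (9) (53/(6r²))·A + (1/r⁴)(−(43/12)x₁² + (25/24)x₂² + (39/8)x₃² + (209/3)x₄²)·B + (2/r⁶)·[((4/3)x₁² + (25/12)x₂² + 3x₃² + (16/3)x₄²)(−(1/4)x₁² + (9/16)x₃² + 3x₄²) + x₃²(−(15/4)x₁² − (225/64)x₂² − (27/16)x₃² + 9x₄²)]·C = 0; (10) (299/(12r²))·A + (1/r⁴)((223/12)x₁² + (3775/96)x₂² + (1167/16)x₃² + 2x₄²)·B + (8/(3r⁶))·[(x₁² + (25/16)x₂² + (9/4)x₃² + 4x₄²)((5/4)x₁²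 + (75/32)x₂² + (63/16)x₃² + 9x₄²) − x₄²(17x₁² + (375/16)x₂² + (117/4)x₃² + 36x₄²)]·C = 0. -/

import Mathlib

set_option maxHeartbeats 2000000 in
/-- The homogeneous Bach-tensor system: for `r > 0` and nonzero reals `A, B, C`,
the ten polynomial equations obtained by setting the components of the deformed Bach
tensor to zero (with `(α₁, α₂, α₃, α₄) = (1, 5/4, 3/2, 2)`) admit no real solution
`(x₁, x₂, x₃, x₄)`. -/
theorem bach_system_no_real_solution
    (r A B C : ℝ) (hr : 0 < r) (hA : A ≠ 0) (hB : B ≠ 0) (hC : C ≠ 0) :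
    ¬ ∃ x₁ x₂ x₃ x₄ : ℝ,
      -- off-diagonal equations
      x₁ * x₂ * (2 / r ^ 2 * (x₁ ^ 2 + 75 / 32 * x₂ ^ 2 + 9 / 2 * x₃ ^ 2 +
        12 * x₄ ^ 2) * C + 141 / 8 * B) = 0 ∧
      x₁ * x₃ * (2 / r ^ 2 * (1 / 4 * x₁ ^ 2 + 75 / 64 * x₂ ^ 2 + 45 / 16 * x₃ ^ 2 +
        9 * x₄ ^ 2) * C + 189 / 16 * B) = 0 ∧
      x₁ * x₄ * (2 / r ^ 2 * (5 / 4 * x₁ ^ 2 + 75 / 64 * x₂ ^ 2 + 9 / 16 * x₃ ^ 2 -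
        3 * x₄ ^ 2) * C + 9 / 16 * B) = 0 ∧
      x₂ * x₃ * (2 / r ^ 2 * (-(1 / 2) * x₁ ^ 2 + 9 / 8 * x₃ ^ 2 +
        6 * x₄ ^ 2) * C + 19 / 4 * B) = 0 ∧
      x₂ * x₄ * (2 / r ^ 2 * (x₁ ^ 2 + 75 / 32 * x₂ ^ 2 + 9 / 4 * x₃ ^ 2) * C +
        73 / 8 * B) = 0 ∧
      x₃ * x₄ * (2 / r ^ 2 * (11 / 4 * x₁ ^ 2 + 225 / 64 * x₂ ^ 2 + 63 / 16 * x₃ ^ 2 +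
        3 * x₄ ^ 2) * C + 287 / 16 * B) = 0 ∧
      -- diagonal equations
      (-(323 / (12 * r ^ 2)) * A +
        1 / (3 * r ^ 4) * (7 / 2 * x₁ ^ 2 - 4175 / 32 * x₂ ^ 2 - 2727 / 16 * x₃ ^ 2 -
          217 * x₄ ^ 2) * B +
        8 / (3 * r ^ 6) *
          ((x₁ ^ 2 + 25 / 16 * x₂ ^ 2 + 9 / 4 * x₃ ^ 2 + 4 * x₄ ^ 2) *
            (-(7 / 4) * x₁ ^ 2 - 75 / 32 * x₂ ^ 2 - 45 / 16 * x₃ ^ 2 - 3 * x₄ ^ 2) +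
           x₁ ^ 2 * (7 / 4 * x₁ ^ 2 + 225 / 64 * x₂ ^ 2 + 99 / 16 * x₃ ^ 2 +
            15 * x₄ ^ 2)) * C = 0) ∧
      (-(41 / (6 * r ^ 2)) * A +
        1 / r ^ 4 * (-(97 / 6) * x₁ ^ 2 + 75 / 24 * x₂ ^ 2 - 21 * x₃ ^ 2 +
          2 / 3 * x₄ ^ 2) * B +
        1 / (3 * r ^ 6) *
          ((8 * x₁ ^ 2 + 25 / 2 * x₂ ^ 2 + 18 * x₃ ^ 2 + 32 * x₄ ^ 2) *
            (-x₁ ^ 2 - 75 / 64 * x₂ ^ 2 - 9 / 8 * x₃ ^ 2) +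
           x₂ ^ 2 * (25 / 8 * x₁ ^ 2 + 1875 / 128 * x₂ ^ 2 + 1125 / 32 * x₃ ^ 2 +
            225 / 2 * x₄ ^ 2)) * C = 0) ∧
      (53 / (6 * r ^ 2) * A +
        1 / r ^ 4 * (-(43 / 12) * x₁ ^ 2 + 25 / 24 * x₂ ^ 2 + 39 / 8 * x₃ ^ 2 +
          209 / 3 * x₄ ^ 2) * B +
        2 / r ^ 6 *
          ((4 / 3 * x₁ ^ 2 + 25 / 12 * x₂ ^ 2 + 3 * x₃ ^ 2 + 16 / 3 * x₄ ^ 2) *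
            (-(1 / 4) * x₁ ^ 2 + 9 / 16 * x₃ ^ 2 + 3 * x₄ ^ 2) +
           x₃ ^ 2 * (-(15 / 4) * x₁ ^ 2 - 225 / 64 * x₂ ^ 2 - 27 / 16 * x₃ ^ 2 +
            9 * x₄ ^ 2)) * C = 0) ∧
      (299 / (12 * r ^ 2) * A +
        1 / r ^ 4 * (223 / 12 * x₁ ^ 2 + 3775 / 96 * x₂ ^ 2 + 1167 / 16 * x₃ ^ 2 +
          2 * x₄ ^ 2) * B +
        8 / (3 * r ^ 6) *
          ((x₁ ^ 2 + 25 / 16 * x₂ ^ 2 + 9 / 4 * x₃ ^ 2 + 4 * x₄ ^ 2) *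
            (5 / 4 * x₁ ^ 2 + 75 / 32 * x₂ ^ 2 + 63 / 16 * x₃ ^ 2 + 9 * x₄ ^ 2) -
           x₄ ^ 2 * (17 * x₁ ^ 2 + 375 / 16 * x₂ ^ 2 + 117 / 4 * x₃ ^ 2 +
            36 * x₄ ^ 2)) * C = 0) := by
  have hr' : r ≠ 0 := ne_of_gt hr
  rintro ⟨x₁, x₂, x₃, x₄, h1, h2, h3, h4, h5, h6, h7, h8, h9, h10⟩
  have H7 : (-32 : ℝ) * C * x₄ ^ 4 + (-48 : ℝ) * C * x₃ ^ 2 * x₄ ^ 2 + (-135/8 : ℝ) * C * x₃ ^ 4 + (-75/2 : ℝ) * C * x₂ ^ 2 * x₄ ^ 2 + (-825/32 : ℝ) * C * x₂ ^ 2 * x₃ ^ 2 + (-625/64 : ℝ) * C * x₂ ^ 4 + (40/3 : ℝ) * C * x₁ ^ 2 * x₄ ^ 2 + (-3/2 : ℝ) * C * x₁ ^ 2 * x₃ ^ 2 + (-25/6 : ℝ) * C * x₁ ^ 2 * x₂ ^ 2 + (-217/3 : ℝ) * B * r ^ 2 * x₄ ^ 2 + (-909/16 : ℝ) * B * r ^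 2 * x₃ ^ 2 + (-4175/96 : ℝ) * B * r ^ 2 * x₂ ^ 2 + (7/6 : ℝ) * B * r ^ 2 * x₁ ^ 2 + (-323/12 : ℝ) * A * r ^ 4 = 0 := by
    have e : (-32 : ℝ) * C * x₄ ^ 4 + (-48 : ℝ) * C * x₃ ^ 2 * x₄ ^ 2 + (-135/8 : ℝ) * C * x₃ ^ 4 + (-75/2 : ℝ) * C * x₂ ^ 2 * x₄ ^ 2 + (-825/32 : ℝ) * C * x₂ ^ 2 * x₃ ^ 2 + (-625/64 : ℝ) * C * x₂ ^ 4 + (40/3 : ℝ) * C * x₁ ^ 2 * x₄ ^ 2 + (-3/2 : ℝ) * C * x₁ ^ 2 * x₃ ^ 2 + (-25/6 : ℝ) * C * x₁ ^ 2 * x₂ ^ 2 + (-217/3 : ℝ) * B * r ^ 2 * x₄ ^ 2 + (-909/16 : ℝ) * B * r ^ 2 * x₃ ^ 2 + (-4175/96 : ℝ) * B * r ^ 2 * x₂ ^ 2 + (7/6 : ℝ) * B * r ^ 2 * x₁ ^ 2 + (-323/12 : ℝ) * A * r ^ 4 = r ^ 6 * (-(323 / (12 * r ^ 2)) * A +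
        1 / (3 * r ^ 4) * (7 / 2 * x₁ ^ 2 - 4175 / 32 * x₂ ^ 2 - 2727 / 16 * x₃ ^ 2 -
          217 * x₄ ^ 2) * B +
        8 / (3 * r ^ 6) *
          ((x₁ ^ 2 + 25 / 16 * x₂ ^ 2 + 9 / 4 * x₃ ^ 2 + 4 * x₄ ^ 2) *
            (-(7 / 4) * x₁ ^ 2 - 75 / 32 * x₂ ^ 2 - 45 / 16 * x₃ ^ 2 - 3 * x₄ ^ 2) +
           x₁ ^ 2 * (7 / 4 * x₁ ^ 2 + 225 / 64 * x₂ ^ 2 + 99 / 16 * x₃ ^ 2 +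
            15 * x₄ ^ 2)) * C) := by
      field_simp
      ring
    rw [e, h7, mul_zero]
  have H8 : (-12 : ℝ) * C * x₃ ^ 2 * x₄ ^ 2 + (-27/4 : ℝ) * C * x₃ ^ 4 + (25 : ℝ) * C * x₂ ^ 2 * x₄ ^ 2 + (-32/3 : ℝ) * C * x₁ ^ 2 * x₄ ^ 2 + (-9 : ℝ) * C * x₁ ^ 2 * x₃ ^ 2 + (-25/4 : ℝ) * C * x₁ ^ 2 * x₂ ^ 2 + (-8/3 : ℝ) * C * x₁ ^ 4 + (2/3 : ℝ) * B * r ^ 2 * x₄ ^ 2 + (-21 : ℝ) * B * r ^ 2 * x₃ ^ 2 + (25/8 : ℝ) * B * r ^ 2 * x₂ ^ 2 + (-97/6 : ℝ) * B * r ^ 2 * x₁ ^ 2 + (-41/6 : ℝ) * A * r ^ 4 = 0 := by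
    have e : (-12 : ℝ) * C * x₃ ^ 2 * x₄ ^ 2 + (-27/4 : ℝ) * C * x₃ ^ 4 + (25 : ℝ) * C * x₂ ^ 2 * x₄ ^ 2 + (-32/3 : ℝ) * C * x₁ ^ 2 * x₄ ^ 2 + (-9 : ℝ) * C * x₁ ^ 2 * x₃ ^ 2 + (-25/4 : ℝ) * C * x₁ ^ 2 * x₂ ^ 2 + (-8/3 : ℝ) * C * x₁ ^ 4 + (2/3 : ℝ) * B * r ^ 2 * x₄ ^ 2 + (-21 : ℝ) * B * r ^ 2 * x₃ ^ 2 + (25/8 : ℝ) * B * r ^ 2 * x₂ ^ 2 + (-97/6 : ℝ) * B * r ^ 2 * x₁ ^ 2 + (-41/6 : ℝ) * A * r ^ 4 = r ^ 6 * (-(41 / (6 * r ^ 2)) * A +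
        1 / r ^ 4 * (-(97 / 6) * x₁ ^ 2 + 75 / 24 * x₂ ^ 2 - 21 * x₃ ^ 2 +
          2 / 3 * x₄ ^ 2) * B +
        1 / (3 * r ^ 6) *
          ((8 * x₁ ^ 2 + 25 / 2 * x₂ ^ 2 + 18 * x₃ ^ 2 + 32 * x₄ ^ 2) *
            (-x₁ ^ 2 - 75 / 64 * x₂ ^ 2 - 9 / 8 * x₃ ^ 2) +
           x₂ ^ 2 * (25 / 8 * x₁ ^ 2 + 1875 / 128 * x₂ ^ 2 + 1125 / 32 * x₃ ^ 2 +
            225 / 2 * x₄ ^ 2)) * C) := by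
      field_simp
      ring
    rw [e, h8, mul_zero]
  have H9 : (32 : ℝ) * C * x₄ ^ 4 + (42 : ℝ) * C * x₃ ^ 2 * x₄ ^ 2 + (25/2 : ℝ) * C * x₂ ^ 2 * x₄ ^ 2 + (-75/16 : ℝ) * C * x₂ ^ 2 * x₃ ^ 2 + (16/3 : ℝ) * C * x₁ ^ 2 * x₄ ^ 2 + (-15/2 : ℝ) * C * x₁ ^ 2 * x₃ ^ 2 + (-25/24 : ℝ) * C * x₁ ^ 2 * x₂ ^ 2 + (-2/3 : ℝ) * C * x₁ ^ 4 + (209/3 : ℝ) * B * r ^ 2 * x₄ ^ 2 + (39/8 : ℝ) * B * r ^ 2 * x₃ ^ 2 + (25/24 : ℝ) * B * r ^ 2 * x₂ ^ 2 + (-43/12 : ℝ) * B * r ^ 2 * x₁ ^ 2 + (53/6 : ℝ) * A * r ^ 4 = 0 := by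
    have e : (32 : ℝ) * C * x₄ ^ 4 + (42 : ℝ) * C * x₃ ^ 2 * x₄ ^ 2 + (25/2 : ℝ) * C * x₂ ^ 2 * x₄ ^ 2 + (-75/16 : ℝ) * C * x₂ ^ 2 * x₃ ^ 2 + (16/3 : ℝ) * C * x₁ ^ 2 * x₄ ^ 2 + (-15/2 : ℝ) * C * x₁ ^ 2 * x₃ ^ 2 + (-25/24 : ℝ) * C * x₁ ^ 2 * x₂ ^ 2 + (-2/3 : ℝ) * C * x₁ ^ 4 + (209/3 : ℝ) * B * r ^ 2 * x₄ ^ 2 + (39/8 : ℝ) * B * r ^ 2 * x₃ ^ 2 + (25/24 : ℝ) * B * r ^ 2 * x₂ ^ 2 + (-43/12 : ℝ) * B * r ^ 2 * x₁ ^ 2 + (53/6 : ℝ) * A * r ^ 4 = r ^ 6 * (53 / (6 * r ^ 2) * A +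
        1 / r ^ 4 * (-(43 / 12) * x₁ ^ 2 + 25 / 24 * x₂ ^ 2 + 39 / 8 * x₃ ^ 2 +
          209 / 3 * x₄ ^ 2) * B +
        2 / r ^ 6 *
          ((4 / 3 * x₁ ^ 2 + 25 / 12 * x₂ ^ 2 + 3 * x₃ ^ 2 + 16 / 3 * x₄ ^ 2) *
            (-(1 / 4) * x₁ ^ 2 + 9 / 16 * x₃ ^ 2 + 3 * x₄ ^ 2) +
           x₃ ^ 2 * (-(15 / 4) * x₁ ^ 2 - 225 / 64 * x₂ ^ 2 - 27 / 16 * x₃ ^ 2 +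
            9 * x₄ ^ 2)) * C) := by
      field_simp
      ring
    rw [e, h9, mul_zero]
  have H10 : (18 : ℝ) * C * x₃ ^ 2 * x₄ ^ 2 + (189/8 : ℝ) * C * x₃ ^ 4 + (975/32 : ℝ) * C * x₂ ^ 2 * x₃ ^ 2 + (625/64 : ℝ) * C * x₂ ^ 4 + (-8 : ℝ) * C * x₁ ^ 2 * x₄ ^ 2 + (18 : ℝ) * C * x₁ ^ 2 * x₃ ^ 2 + (275/24 : ℝ) * C * x₁ ^ 2 * x₂ ^ 2 + (10/3 : ℝ) * C * x₁ ^ 4 + (2 : ℝ) * B * r ^ 2 * x₄ ^ 2 + (1167/16 : ℝ) * B * r ^ 2 * x₃ ^ 2 + (3775/96 : ℝ) * B * r ^ 2 * x₂ ^ 2 + (223/12 : ℝ) * B * r ^ 2 * x₁ ^ 2 + (299/12 : ℝ) * A * r ^ 4 = 0 := by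
    have e : (18 : ℝ) * C * x₃ ^ 2 * x₄ ^ 2 + (189/8 : ℝ) * C * x₃ ^ 4 + (975/32 : ℝ) * C * x₂ ^ 2 * x₃ ^ 2 + (625/64 : ℝ) * C * x₂ ^ 4 + (-8 : ℝ) * C * x₁ ^ 2 * x₄ ^ 2 + (18 : ℝ) * C * x₁ ^ 2 * x₃ ^ 2 + (275/24 : ℝ) * C * x₁ ^ 2 * x₂ ^ 2 + (10/3 : ℝ) * C * x₁ ^ 4 + (2 : ℝ) * B * r ^ 2 * x₄ ^ 2 + (1167/16 : ℝ) * B * r ^ 2 * x₃ ^ 2 + (3775/96 : ℝ) * B * r ^ 2 * x₂ ^ 2 + (223/12 : ℝ) * B * r ^ 2 * x₁ ^ 2 + (299/12 : ℝ) * A * r ^ 4 = r ^ 6 * (299 / (12 * r ^ 2) * A +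
        1 / r ^ 4 * (223 / 12 * x₁ ^ 2 + 3775 / 96 * x₂ ^ 2 + 1167 / 16 * x₃ ^ 2 +
          2 * x₄ ^ 2) * B +
        8 / (3 * r ^ 6) *
          ((x₁ ^ 2 + 25 / 16 * x₂ ^ 2 + 9 / 4 * x₃ ^ 2 + 4 * x₄ ^ 2) *
            (5 / 4 * x₁ ^ 2 + 75 / 32 * x₂ ^ 2 + 63 / 16 * x₃ ^ 2 + 9 * x₄ ^ 2) -
           x₄ ^ 2 * (17 * x₁ ^ 2 + 375 / 16 * x₂ ^ 2 + 117 / 4 * x₃ ^ 2 +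
            36 * x₄ ^ 2)) * C) := by
      field_simp
      ring
    rw [e, h10, mul_zero]
  have G12 : x₁ * x₂ * (2 * ((1 : ℝ) * x₁ ^ 2 + (75/32 : ℝ) * x₂ ^ 2 + (9/2 : ℝ) * x₃ ^ 2 + (12 : ℝ) * x₄ ^ 2) * C + (141/8 : ℝ) * B * r ^ 2) = 0 := by
    have e : x₁ * x₂ * (2 * ((1 : ℝ) * x₁ ^ 2 + (75/32 : ℝ) * x₂ ^ 2 + (9/2 : ℝ) * x₃ ^ 2 + (12 : ℝ) * x₄ ^ 2) * C + (141/8 : ℝ) * B * r ^ 2) = r ^ 2 * (x₁ * x₂ * (2 / r ^ 2 * (x₁ ^ 2 + 75 / 32 * x₂ ^ 2 + 9 / 2 * x₃ ^ 2 +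
        12 * x₄ ^ 2) * C + 141 / 8 * B)) := by
      field_simp
    rw [e, h1, mul_zero]
  have G13 : x₁ * x₃ * (2 * ((1/4 : ℝ) * x₁ ^ 2 + (75/64 : ℝ) * x₂ ^ 2 + (45/16 : ℝ) * x₃ ^ 2 + (9 : ℝ) * x₄ ^ 2) * C + (189/16 : ℝ) * B * r ^ 2) = 0 := by
    have e : x₁ * x₃ * (2 * ((1/4 : ℝ) * x₁ ^ 2 + (75/64 : ℝ) * x₂ ^ 2 + (45/16 : ℝ) * x₃ ^ 2 + (9 : ℝ) * x₄ ^ 2) * C + (189/16 : ℝ) * B * r ^ 2) = r ^ 2 * (x₁ * x₃ * (2 / r ^ 2 * (1 / 4 * x₁ ^ 2 + 75 / 64 * x₂ ^ 2 + 45 / 16 * x₃ ^ 2 +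
        9 * x₄ ^ 2) * C + 189 / 16 * B)) := by
      field_simp
    rw [e, h2, mul_zero]
  have G14 : x₁ * x₄ * (2 * ((5/4 : ℝ) * x₁ ^ 2 + (75/64 : ℝ) * x₂ ^ 2 + (9/16 : ℝ) * x₃ ^ 2 + (-3 : ℝ) * x₄ ^ 2) * C + (9/16 : ℝ) * B * r ^ 2) = 0 := by
    have e : x₁ * x₄ * (2 * ((5/4 : ℝ) * x₁ ^ 2 + (75/64 : ℝ) * x₂ ^ 2 + (9/16 : ℝ) * x₃ ^ 2 + (-3 : ℝ) * x₄ ^ 2) * C + (9/16 : ℝ) * B * r ^ 2) = r ^ 2 * (x₁ * x₄ * (2 / r ^ 2 * (5 / 4 * x₁ ^ 2 + 75 / 64 * x₂ ^ 2 + 9 / 16 * x₃ ^ 2 -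
        3 * x₄ ^ 2) * C + 9 / 16 * B)) := by
      field_simp
      ring
    rw [e, h3, mul_zero]
  have G23 : x₂ * x₃ * (2 * ((-1/2 : ℝ) * x₁ ^ 2 + (9/8 : ℝ) * x₃ ^ 2 + (6 : ℝ) * x₄ ^ 2) * C + (19/4 : ℝ) * B * r ^ 2) = 0 := by
    have e : x₂ * x₃ * (2 * ((-1/2 : ℝ) * x₁ ^ 2 + (9/8 : ℝ) * x₃ ^ 2 + (6 : ℝ) * x₄ ^ 2) * C + (19/4 : ℝ) * B * r ^ 2) = r ^ 2 * (x₂ * x₃ * (2 / r ^ 2 * (-(1 / 2) * x₁ ^ 2 + 9 / 8 * x₃ ^ 2 +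
        6 * x₄ ^ 2) * C + 19 / 4 * B)) := by
      field_simp
    rw [e, h4, mul_zero]
  have G24 : x₂ * x₄ * (2 * ((1 : ℝ) * x₁ ^ 2 + (75/32 : ℝ) * x₂ ^ 2 + (9/4 : ℝ) * x₃ ^ 2) * C + (73/8 : ℝ) * B * r ^ 2) = 0 := by
    have e : x₂ * x₄ * (2 * ((1 : ℝ) * x₁ ^ 2 + (75/32 : ℝ) * x₂ ^ 2 + (9/4 : ℝ) * x₃ ^ 2) * C + (73/8 : ℝ) * B * r ^ 2) = r ^ 2 * (x₂ * x₄ * (2 / r ^ 2 * (x₁ ^ 2 + 75 / 32 * x₂ ^ 2 + 9 / 4 * x₃ ^ 2) * C +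
        73 / 8 * B)) := by
      field_simp
    rw [e, h5, mul_zero]
  have G34 : x₃ * x₄ * (2 * ((11/4 : ℝ) * x₁ ^ 2 + (225/64 : ℝ) * x₂ ^ 2 + (63/16 : ℝ) * x₃ ^ 2 + (3 : ℝ) * x₄ ^ 2) * C + (287/16 : ℝ) * B * r ^ 2) = 0 := by
    have e : x₃ * x₄ * (2 * ((11/4 : ℝ) * x₁ ^ 2 + (225/64 : ℝ) * x₂ ^ 2 + (63/16 : ℝ) * x₃ ^ 2 + (3 : ℝ) * x₄ ^ 2) * C + (287/16 : ℝ) * B * r ^ 2) = r ^ 2 * (x₃ * x₄ * (2 / r ^ 2 * (11 / 4 * x₁ ^ 2 + 225 / 64 * x₂ ^ 2 + 63 / 16 * x₃ ^ 2 +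
        3 * x₄ ^ 2) * C + 287 / 16 * B)) := by
      field_simp
    rw [e, h6, mul_zero]
  clear h1 h2 h3 h4 h5 h6 h7 h8 h9 h10
  by_cases hx1 : x₁ = 0 <;> by_cases hx2 : x₂ = 0 <;> by_cases hx3 : x₃ = 0 <;> by_cases hx4 : x₄ = 0
  · -- nonzero: []
    subst hx1 hx2 hx3 hx4
    have key : A * r ^ 4 = 0 := by linear_combination ((-12/323 : ℝ)) * H7
    exact mul_ne_zero hA (pow_ne_zero 4 hr') key
  · -- nonzero: [4]
    subst hx1 hx2 hx3
    have key : A * r ^ 4 = 0 := by linear_combination ((-12/545 : ℝ)) * H7 + ((-48/545 : ℝ)) * H8 + ((-12/545 : ℝ)) * H9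
    exact mul_ne_zero hA (pow_ne_zero 4 hr') key
  · -- nonzero: [3]
    subst hx1 hx2 hx4
    have key : A * r ^ 4 = 0 := by linear_combination ((-52/105 : ℝ)) * H7 + ((26/21 : ℝ)) * H8 + ((-46/105 : ℝ)) * H9
    exact mul_ne_zero hA (pow_ne_zero 4 hr') key
  · -- nonzero: [3, 4]
    subst hx1 hx2
    have K34 := (mul_eq_zero.mp G34).resolve_left (mul_ne_zero hx3 hx4)
    have key : C * x₃ ^ 6 = 0 := by linear_combination ((-1013705540/9374186997 : ℝ) * x₃ ^ 2) * H7 + ((-7914827392/28122560991 : ℝ) * x₄ ^ 2) * H7 + ((13443176851/9374186997 : ℝ) * x₃ ^ 2) * H8 + ((22748729312/28122560991 : ℝ) * x₄ ^ 2) * H8 + ((2436835259/3124728999 : ℝ) * x₃ ^ 2) * H9 + ((-724416608/3124728999 : ℝ) * x₄ ^ 2) * H9 + ((3513623270/3124728999 : ℝ) * x₃ ^ 4) * K34 + ((-95604749840/28122560991 : ℝ) * x₃ ^ 2 * x₄ ^ 2) * K34 + ((-22321246720/84367682973 : ℝ) * x₄ ^ 4) * K34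
    exact mul_ne_zero hC (pow_ne_zero 6 hx3) key
  · -- nonzero: [2]
    subst hx1 hx3 hx4
    have key : A * r ^ 4 = 0 := by linear_combination ((-3/100 : ℝ)) * H8 + ((9/100 : ℝ)) * H9
    exact mul_ne_zero hA (pow_ne_zero 4 hr') key
  · -- nonzero: [2, 4]
    subst hx1 hx3
    have K24 := (mul_eq_zero.mp G24).resolve_left (mul_ne_zero hx2 hx4)
    have key : C * x₂ ^ 6 = 0 := by linear_combination ((895927832/208873125 : ℝ) * x₂ ^ 2) * H7 + ((49598750912/5221828125 : ℝ) * x₄ ^ 2) * H7 + ((4752488194/208873125 : ℝ) * x₂ ^ 2) * H8 + ((-131255231072/5221828125 : ℝ) * x₄ ^ 2) * H8 + ((6406497374/208873125 : ℝ) * x₂ ^ 2) * H9 + ((49598750912/5221828125 : ℝ) * x₄ ^ 2) * H9 + ((45865822/5012955 : ℝ) * x₂ ^ 4) * K24 + ((-1245197792/8354925 : ℝ) * x₂ ^ 2 * x₄ ^ 2) * K24 + ((14450421248/3133096875 : ℝ) * x₄ ^ 4) * K24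
    exact mul_ne_zero hC (pow_ne_zero 6 hx2) key
  · -- nonzero: [2, 3]
    subst hx1 hx4
    have K23 := (mul_eq_zero.mp G23).resolve_left (mul_ne_zero hx2 hx3)
    have key : C * x₂ ^ 6 = 0 := by linear_combination ((-64/625 : ℝ) * x₂ ^ 2) * H7 + ((2565850176/123770140625 : ℝ) * x₃ ^ 2) * H7 + ((1754279024/4950805625 : ℝ) * x₂ ^ 2) * H8 + ((-1090943424/24754028125 : ℝ) * x₃ ^ 2) * H8 + ((-37543408/990161125 : ℝ) * x₂ ^ 2) * H9 + ((3598894368/123770140625 : ℝ) * x₃ ^ 2) * H9 + ((-138109496/118819335 : ℝ) * x₂ ^ 4) * K23 + ((587308176/990161125 : ℝ) * x₂ ^ 2 * x₃ ^ 2) * K23 + ((575944992/24754028125 : ℝ) * x₃ ^ 4) * K23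
    exact mul_ne_zero hC (pow_ne_zero 6 hx2) key
  · -- nonzero: [2, 3, 4]
    subst hx1
    have K23 := (mul_eq_zero.mp G23).resolve_left (mul_ne_zero hx2 hx3)
    have K24 := (mul_eq_zero.mp G24).resolve_left (mul_ne_zero hx2 hx4)
    have K34 := (mul_eq_zero.mp G34).resolve_left (mul_ne_zero hx3 hx4)
    have key : A * r ^ 4 = 0 := by linear_combination ((-5776/24525 : ℝ)) * H7 + ((3422/4905 : ℝ)) * H8 + ((-1588/24525 : ℝ)) * H9 + ((-1627/981 : ℝ) * x₂ ^ 2) * K23 + ((838/1635 : ℝ) * x₃ ^ 2) * K23 + ((-11168/24525 : ℝ) * x₄ ^ 2) * K23 + ((-1444/2943 : ℝ) * x₂ ^ 2) * K24 + ((-152/1635 : ℝ) * x₃ ^ 2) * K24 + ((-87296/73575 : ℝ) * x₄ ^ 2) * K24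
    exact mul_ne_zero hA (pow_ne_zero 4 hr') key
  · -- nonzero: [1]
    subst hx2 hx3 hx4
    have key : A * r ^ 4 = 0 := by linear_combination ((-4/215 : ℝ)) * H7 + ((-28/2365 : ℝ)) * H8 + ((112/2365 : ℝ)) * H9
    exact mul_ne_zero hA (pow_ne_zero 4 hr') key
  · -- nonzero: [1, 4]
    subst hx2 hx3
    have K14 := (mul_eq_zero.mp G14).resolve_left (mul_ne_zero hx1 hx4)
    have key : C * x₁ ^ 6 = 0 := by linear_combination ((-4574645577/25175434432 : ℝ) * x₁ ^ 2) * H7 + ((2989288449/6293858608 : ℝ) * x₄ ^ 2) * H7 + ((10577412297/100701737728 : ℝ) * x₁ ^ 2) * H8 + ((-30711269961/25175434432 : ℝ) * x₄ ^ 2) * H8 + ((-47576361105/100701737728 : ℝ) * x₁ ^ 2) * H9 + ((12677703201/25175434432 : ℝ) * x₄ ^ 2) * H9 + ((9719059645/25175434432 : ℝ) * x₁ ^ 4) * K14 + ((3437657385/1573464652 : ℝ) * x₁ ^ 2 * x₄ ^ 2) * K14 + ((240183135/1573464652 : ℝ) * x₄ ^ 4) * K14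
    exact mul_ne_zero hC (pow_ne_zero 6 hx1) key
  · -- nonzero: [1, 3]
    subst hx2 hx4
    have K13 := (mul_eq_zero.mp G13).resolve_left (mul_ne_zero hx1 hx3)
    have key : C * x₁ ^ 6 = 0 := by linear_combination ((391692005/2888586404 : ℝ) * x₁ ^ 2) * H7 + ((-261947751/5777172808 : ℝ) * x₃ ^ 2) * H7 + ((-5918460949/11554345616 : ℝ) * x₁ ^ 2) * H8 + ((2237116335/23108691232 : ℝ) * x₃ ^ 2) * H8 + ((195776157/11554345616 : ℝ) * x₁ ^ 2) * H9 + ((-1462197687/23108691232 : ℝ) * x₃ ^ 2) * H9 + ((-142943005/201529284 : ℝ) * x₁ ^ 4) * K13 + ((-426566835/2888586404 : ℝ) * x₁ ^ 2 * x₃ ^ 2) * K13 + ((-229416705/11554345616 : ℝ) * x₃ ^ 4) * K13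
    exact mul_ne_zero hC (pow_ne_zero 6 hx1) key
  · -- nonzero: [1, 3, 4]
    subst hx2
    have K13 := (mul_eq_zero.mp G13).resolve_left (mul_ne_zero hx1 hx3)
    have K14 := (mul_eq_zero.mp G14).resolve_left (mul_ne_zero hx1 hx4)
    have K34 := (mul_eq_zero.mp G34).resolve_left (mul_ne_zero hx3 hx4)
    have key : A * r ^ 4 = 0 := by linear_combination ((2202/4265 : ℝ)) * H7 + ((-13659/8530 : ℝ)) * H8 + ((3819/8530 : ℝ)) * H9 + ((-78712/38385 : ℝ) * x₁ ^ 2) * K13 + ((-2573/4265 : ℝ) * x₃ ^ 2) * K13 + ((1408/2559 : ℝ) * x₄ ^ 2) * K13 + ((-45238/38385 : ℝ) * x₁ ^ 2) * K14 + ((4918/4265 : ℝ) * x₃ ^ 2) * K14 + ((1096/853 : ℝ) * x₄ ^ 2) * K14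
    exact mul_ne_zero hA (pow_ne_zero 4 hr') key
  · -- nonzero: [1, 2]
    subst hx3 hx4
    have K12 := (mul_eq_zero.mp G12).resolve_left (mul_ne_zero hx1 hx2)
    have key : C * x₁ ^ 6 = 0 := by linear_combination ((-4446141/1594822 : ℝ) * x₁ ^ 2) * H7 + ((-30808125/17543042 : ℝ) * x₂ ^ 2) * H7 + ((53587395/35086084 : ℝ) * x₁ ^ 2) * H8 + ((-225515475/140344336 : ℝ) * x₂ ^ 2) * H8 + ((-128302413/17543042 : ℝ) * x₁ ^ 2) * H9 + ((-925476075/140344336 : ℝ) * x₂ ^ 2) * H9 + ((78590/797411 : ℝ) * x₁ ^ 4) * K12 + ((-330368625/35086084 : ℝ) * x₁ ^ 2 * x₂ ^ 2) * K12 + ((-256734375/70172168 : ℝ) * x₂ ^ 4) * K12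
    exact mul_ne_zero hC (pow_ne_zero 6 hx1) key
  · -- nonzero: [1, 2, 4]
    subst hx3
    have K12 := (mul_eq_zero.mp G12).resolve_left (mul_ne_zero hx1 hx2)
    have K14 := (mul_eq_zero.mp G14).resolve_left (mul_ne_zero hx1 hx4)
    have K24 := (mul_eq_zero.mp G24).resolve_left (mul_ne_zero hx2 hx4)
    have key : A * r ^ 4 = 0 := by linear_combination ((-2349/9215 : ℝ)) * H7 + ((17298/46075 : ℝ)) * H8 + ((-34383/92150 : ℝ)) * H9 + ((39118/138225 : ℝ) * x₁ ^ 2) * K12 + ((-7555/11058 : ℝ) * x₂ ^ 2) * K12 + ((53272/138225 : ℝ) * x₄ ^ 2) * K12 + ((10306/138225 : ℝ) * x₁ ^ 2) * K14 + ((3365/11058 : ℝ) * x₂ ^ 2) * K14 + ((125944/138225 : ℝ) * x₄ ^ 2) * K14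
    exact mul_ne_zero hA (pow_ne_zero 4 hr') key
  · -- nonzero: [1, 2, 3]
    subst hx4
    have K12 := (mul_eq_zero.mp G12).resolve_left (mul_ne_zero hx1 hx2)
    have K13 := (mul_eq_zero.mp G13).resolve_left (mul_ne_zero hx1 hx3)
    have K23 := (mul_eq_zero.mp G23).resolve_left (mul_ne_zero hx2 hx3)
    have key : A * r ^ 4 = 0 := by linear_combination ((-10278/236945 : ℝ)) * H7 + ((31359/236945 : ℝ)) * H8 + ((19764/236945 : ℝ)) * H9 + ((34372/142167 : ℝ) * x₁ ^ 2) * K12 + ((1990/47389 : ℝ) * x₂ ^ 2) * K12 + ((80013/236945 : ℝ) * x₃ ^ 2) * K12 + ((-21328/142167 : ℝ) * x₁ ^ 2) * K13 + ((-12545/47389 : ℝ) * x₂ ^ 2) * K13 + ((-121224/236945 : ℝ) * x₃ ^ 2) * K13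
    exact mul_ne_zero hA (pow_ne_zero 4 hr') key
  · -- nonzero: [1, 2, 3, 4]
    have K12 := (mul_eq_zero.mp G12).resolve_left (mul_ne_zero hx1 hx2)
    have K13 := (mul_eq_zero.mp G13).resolve_left (mul_ne_zero hx1 hx3)
    have K14 := (mul_eq_zero.mp G14).resolve_left (mul_ne_zero hx1 hx4)
    have K23 := (mul_eq_zero.mp G23).resolve_left (mul_ne_zero hx2 hx3)
    have K24 := (mul_eq_zero.mp G24).resolve_left (mul_ne_zero hx2 hx4)
    have K34 := (mul_eq_zero.mp G34).resolve_left (mul_ne_zero hx3 hx4)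
    have key : A * r ^ 4 = 0 := by linear_combination ((11206/3399 : ℝ)) * H7 + ((-14651/1133 : ℝ)) * H8 + ((530/3399 : ℝ)) * H9 + ((-883876/10197 : ℝ) * x₁ ^ 2) * K12 + ((-1100/309 : ℝ) * x₂ ^ 2) * K12 + ((49439/3399 : ℝ) * x₃ ^ 2) * K12 + ((926000/10197 : ℝ) * x₄ ^ 2) * K12 + ((3357488/30591 : ℝ) * x₁ ^ 2) * K13 + ((212675/10197 : ℝ) * x₂ ^ 2) * K13 + ((-98228/3399 : ℝ) * x₃ ^ 2) * K13 + ((-392576/3399 : ℝ) * x₄ ^ 2) * K13 + ((1029128/30591 : ℝ) * x₁ ^ 2) * K14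
    exact mul_ne_zero hA (pow_ne_zero 4 hr') key
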